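/- Existence of a market optimal price: for any agent set {(v_i, B_i, Γ_i)}, there exist intervals I*_i and a single uniform price λ* such that, under constraints (I*_i, λ*) for all i, the supply-demand balance Σ_{i∈𝓑} min{r*_i, B_i/λ*} = Σ_{j∈𝓢} min{l*_j, Γ_j} holds (where 𝓑 = {i : v_i ≥ λ*}, 𝓢 = {i : v_i < λ*}) and the unique reachable state achieves the optimal market liquid welfare OPT. -/

import Mathlib

open Finset

/-- Reachability of a market state `(x,p)` under constraints `([−l_i,r_i], λ_i)`. -/
def Reachable (n : ℕ) (v B Γ l r lam : ℕ → ℝ) (x p : ℕ → ℝ) : Prop :=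
  (∑ i ∈ Icc 1 n, x i = 0) ∧
  (∀ i ∈ Icc 1 n, -(l i) ≤ x i ∧ x i ≤ r i ∧ -Γ i ≤ x i ∧
    p i = lam i * x i ∧ p i ≤ B i) ∧
  ((∀ i ∈ Icc 1 n, lam i ≤ v i → p i = min (lam i * r i) (B i)) ∨
   (∀ j ∈ Icc 1 n, v j < lam j → x j = -(min (l j) (Γ j))))

private lemma sum_two_diff {S : Finset ℕ} {i j : ℕ} (hij : i ≠ j) (hi : i ∈ S) (hj : j ∈ S)
    (f g : ℕ → ℝ) (h : ∀ k ∈ S, k ≠ i → k ≠ j → f k = g k) :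
    ∑ k ∈ S, f k = ∑ k ∈ S, g k + ((f i - g i) + (f j - g j)) := by
  have key : ∑ k ∈ S, (f k - g k) = ∑ k ∈ ({i, j} : Finset ℕ), (f k - g k) := by
    refine (Finset.sum_subset ?_ ?_).symm
    · intro k hk
      rcases Finset.mem_insert.1 hk with rfl | hk
      · exact hi
      · rcases Finset.mem_singleton.1 hk with rfl; exact hj
    · intro k hk hk2
      have h1 : k ≠ i := fun e => hk2 (by simp [e])
      have h2 : k ≠ j := fun e => hk2 (by simp [e])
      rw [h k hk h1 h2]; ring
  rw [Finset.sum_pair hij] at key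
  have hd : ∑ k ∈ S, (f k - g k) = ∑ k ∈ S, f k - ∑ k ∈ S, g k :=
    Finset.sum_sub_distrib _ _
  linarith [key, hd]

private lemma opt_cap (n : ℕ) (v B Γ : ℕ → ℝ)
    (hv : ∀ i ∈ Icc 1 n, 0 < v i) (hB : ∀ i ∈ Icc 1 n, 0 ≤ B i)
    (hΓ : ∀ i ∈ Icc 1 n, 0 ≤ Γ i) (OPT : ℝ)
    (hub : ∀ z : ℕ → ℝ, (∑ i ∈ Icc 1 n, z i = 0) → (∀ i ∈ Icc 1 n, -Γ i ≤ z i) →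
      ∑ i ∈ Icc 1 n, (v i * Γ i + min (v i * z i) (B i)) ≤ OPT)
    (y : ℕ → ℝ) (hy0 : ∑ i ∈ Icc 1 n, y i = 0) (hyΓ : ∀ i ∈ Icc 1 n, -Γ i ≤ y i)
    (hyw : ∑ i ∈ Icc 1 n, (v i * Γ i + min (v i * y i) (B i)) = OPT) :
    ∀ i ∈ Icc 1 n, 0 < y i → v i * y i ≤ B i := by
  intro i hi hyi
  by_contra hcap
  push_neg at hcap
  have hex : ∃ j ∈ Icc 1 n, y j < 0 := by
    by_contra hall
    push_neg at hall
    have : 0 < ∑ k ∈ Icc 1 n, y k := Finset.sum_pos' (fun k hk => hall k hk) ⟨i, hi, hyi⟩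
    linarith
  obtain ⟨j, hj, hyj⟩ := hex
  have hij : i ≠ j := by intro e; rw [e] at hyi; linarith
  have hvi := hv i hi
  have hBi := hB i hi
  set δ := min ((v i * y i - B i) / v i) (-y j) with hδdef
  have hδ : 0 < δ := lt_min (div_pos (by linarith) hvi) (by linarith)
  have hδ1 : δ ≤ (v i * y i - B i) / v i := min_le_left _ _
  have hδ2 : δ ≤ -y j := min_le_right _ _
  set z := fun k => y k + (if k = j then δ else 0) - (if k = i then δ else 0) with hz
  have hzi : z i = y i - δ := by simp [hz, hij, hij.symm]
  have hzj : z j = y j + δ := by simp [hz, hij, hij.symm, Ne.symm hij]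
  have hzk : ∀ k, k ≠ i → k ≠ j → z k = y k := by intro k h1 h2; simp [hz, h1, h2]
  have hsum : ∑ k ∈ Icc 1 n, z k = 0 := by
    have := sum_two_diff hij hi hj z y (fun k _ h1 h2 => hzk k h1 h2)
    rw [this, hy0, hzi, hzj]; ring
  have hmul : δ * v i ≤ v i * y i - B i := (le_div_iff₀ hvi).1 hδ1
  have hBige : B i ≤ v i * (y i - δ) := by nlinarith
  have hyiδ : 0 ≤ y i - δ := by nlinarith
  have hfeas : ∀ k ∈ Icc 1 n, -Γ k ≤ z k := by
    intro k hk
    rcases eq_or_ne k i with rfl | h1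
    · rw [hzi]; have := hΓ k hk; linarith
    rcases eq_or_ne k j with rfl | h2
    · rw [hzj]; have := hyΓ k hk; linarith
    · rw [hzk k h1 h2]; exact hyΓ k hk
  have hwz : ∑ k ∈ Icc 1 n, (v k * Γ k + min (v k * z k) (B k)) = OPT + v j * δ := by
    have hvj := hv j hj
    have hBj := hB j hj
    have hti : min (v i * z i) (B i) = B i := by
      rw [hzi]; exact min_eq_right (by linarith)
    have htio : min (v i * y i) (B i) = B i := min_eq_right (le_of_lt hcap)
    have htj : min (v j * z j) (B j) = v j * z j := by
      apply min_eq_left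
      have hzj0 : z j ≤ 0 := by rw [hzj]; linarith
      nlinarith
    have htjo : min (v j * y j) (B j) = v j * y j := by
      apply min_eq_left; nlinarith
    have hs := sum_two_diff hij hi hj (fun k => v k * Γ k + min (v k * z k) (B k))
      (fun k => v k * Γ k + min (v k * y k) (B k))
      (fun k _ h1 h2 => by rw [hzk k h1 h2])
    rw [hti, htio, htj, htjo, hzj, hyw] at hs
    rw [hs]; ring
  have hle := hub z hsum hfeas
  have hvj := hv j hj
  nlinarith

private lemma opt_sep (n : ℕ) (v B Γ : ℕ → ℝ)
    (hv : ∀ i ∈ Icc 1 n, 0 < v i) (hB : ∀ i ∈ Icc 1 n, 0 ≤ B i)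
    (hΓ : ∀ i ∈ Icc 1 n, 0 ≤ Γ i) (OPT : ℝ)
    (hub : ∀ z : ℕ → ℝ, (∑ i ∈ Icc 1 n, z i = 0) → (∀ i ∈ Icc 1 n, -Γ i ≤ z i) →
      ∑ i ∈ Icc 1 n, (v i * Γ i + min (v i * z i) (B i)) ≤ OPT)
    (y : ℕ → ℝ) (hy0 : ∑ i ∈ Icc 1 n, y i = 0) (hyΓ : ∀ i ∈ Icc 1 n, -Γ i ≤ y i)
    (hyw : ∑ i ∈ Icc 1 n, (v i * Γ i + min (v i * y i) (B i)) = OPT) :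
    ∀ i ∈ Icc 1 n, ∀ j ∈ Icc 1 n, 0 < y i → y j < 0 → v j ≤ v i := by
  intro i hi j hj hyi hyj
  by_contra hlt
  push_neg at hlt
  have hij : i ≠ j := by intro e; rw [e] at hyi; linarith
  have hvi := hv i hi
  have hvj := hv j hj
  have hBi := hB i hi
  have hBj := hB j hj
  set δ := min (y i) (-y j) with hδdef
  have hδ : 0 < δ := lt_min hyi (by linarith)
  have hδ1 : δ ≤ y i := min_le_left _ _
  have hδ2 : δ ≤ -y j := min_le_right _ _
  set z := fun k => y k + (if k = j then δ else 0) - (if k = i then δ else 0) with hz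
  have hzi : z i = y i - δ := by simp [hz, hij, hij.symm, Ne.symm hij]
  have hzj : z j = y j + δ := by simp [hz, hij, hij.symm, Ne.symm hij]
  have hzk : ∀ k, k ≠ i → k ≠ j → z k = y k := by intro k h1 h2; simp [hz, h1, h2]
  have hsum : ∑ k ∈ Icc 1 n, z k = 0 := by
    have := sum_two_diff hij hi hj z y (fun k _ h1 h2 => hzk k h1 h2)
    rw [this, hy0, hzi, hzj]; ring
  have hfeas : ∀ k ∈ Icc 1 n, -Γ k ≤ z k := by
    intro k hk
    rcases eq_or_ne k i with rfl | h1
    · rw [hzi]; have := hΓ k hk; linarith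
    rcases eq_or_ne k j with rfl | h2
    · rw [hzj]; have := hyΓ k hk; linarith
    · rw [hzk k h1 h2]; exact hyΓ k hk
  -- term i drops by at most v i * δ
  have hti : min (v i * y i) (B i) - v i * δ ≤ min (v i * z i) (B i) := by
    rw [hzi]
    have h1 : min (v i * y i) (B i) - v i * δ ≤ v i * (y i - δ) := by
      have := min_le_left (v i * y i) (B i); nlinarith
    have h2 : min (v i * y i) (B i) - v i * δ ≤ B i := by
      have := min_le_right (v i * y i) (B i); nlinarith
    exact le_min h1 h2
  have htj : min (v j * z j) (B j) = v j * z j := by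
    apply min_eq_left
    have hzj0 : z j ≤ 0 := by rw [hzj]; linarith
    nlinarith
  have htjo : min (v j * y j) (B j) = v j * y j := by
    apply min_eq_left; nlinarith
  have hs := sum_two_diff hij hi hj (fun k => v k * Γ k + min (v k * z k) (B k))
    (fun k => v k * Γ k + min (v k * y k) (B k))
    (fun k _ h1 h2 => by rw [hzk k h1 h2])
  rw [htj, htjo, hzj, hyw] at hs
  have hle := hub z hsum hfeas
  rw [hs] at hle
  nlinarith

private lemma construct (n : ℕ) (v B Γ : ℕ → ℝ)
    (hv : ∀ i ∈ Icc 1 n, 0 < v i) (hB : ∀ i ∈ Icc 1 n, 0 ≤ B i)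
    (hΓ : ∀ i ∈ Icc 1 n, 0 ≤ Γ i) (OPT : ℝ) (y : ℕ → ℝ) (lam : ℝ)
    (h1 : ∑ i ∈ Icc 1 n, y i = 0) (h2 : ∀ i ∈ Icc 1 n, -Γ i ≤ y i)
    (h3 : ∑ i ∈ Icc 1 n, (v i * Γ i + min (v i * y i) (B i)) = OPT)
    (h4 : ∀ i ∈ Icc 1 n, 0 < y i → v i * y i ≤ B i)
    (hl0 : 0 < lam) (hl2 : ∀ i ∈ Icc 1 n, 0 < y i → lam ≤ v i)
    (hl3 : ∀ j ∈ Icc 1 n, y j < 0 → v j < lam) :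
    ∃ (l r : ℕ → ℝ) (lam' : ℝ),
      (∀ i ∈ Icc 1 n, 0 ≤ l i ∧ 0 ≤ r i) ∧ 0 < lam' ∧
      (∑ i ∈ (Icc 1 n).filter (fun i => lam' ≤ v i), min (r i) (B i / lam')
        = ∑ j ∈ (Icc 1 n).filter (fun j => v j < lam'), min (l j) (Γ j)) ∧
      (∃ x p : ℕ → ℝ, Reachable n v B Γ l r (fun _ => lam') x p) ∧
      (∀ x p : ℕ → ℝ, Reachable n v B Γ l r (fun _ => lam') x p →
        ∑ i ∈ Icc 1 n, (v i * Γ i + min (v i * x i) (B i)) = OPT) := by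
  have key1 : ∀ i ∈ Icc 1 n, lam ≤ v i → 0 ≤ y i := by
    intro i hi hvi
    by_contra hneg; push_neg at hneg
    exact absurd (hl3 i hi hneg) (not_lt.2 hvi)
  have key2 : ∀ i ∈ Icc 1 n, v i < lam → y i ≤ 0 := by
    intro i hi hvi
    by_contra hpos; push_neg at hpos
    exact absurd (hl2 i hi hpos) (not_le.2 hvi)
  have keyB : ∀ i ∈ Icc 1 n, 0 ≤ y i → lam * y i ≤ B i := by
    intro i hi h0
    rcases eq_or_lt_of_le h0 with he | hp
    · rw [← he, mul_zero]; exact hB i hi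
    · calc lam * y i ≤ v i * y i := by nlinarith [hl2 i hi hp]
        _ ≤ B i := h4 i hi hp
  refine ⟨fun i => -min (y i) 0, fun i => max (y i) 0, lam, ?_, hl0, ?_, ?_, ?_⟩
  · intro i _
    exact ⟨neg_nonneg.2 (min_le_right _ _), le_max_right _ _⟩
  -- balance
  · have hLHS : ∀ i ∈ (Icc 1 n).filter (fun i => lam ≤ v i),
        min (max (y i) 0) (B i / lam) = y i := by
      intro i hi
      rw [mem_filter] at hi
      have h0 := key1 i hi.1 hi.2
      rw [max_eq_left h0]
      exact min_eq_left ((le_div_iff₀ hl0).2 (by rw [mul_comm]; exact keyB i hi.1 h0))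
    have hRHS : ∀ j ∈ (Icc 1 n).filter (fun j => v j < lam),
        min (-min (y j) 0) (Γ j) = -y j := by
      intro j hj
      rw [mem_filter] at hj
      have h0 := key2 j hj.1 hj.2
      rw [min_eq_left h0]
      exact min_eq_left (by linarith [h2 j hj.1])
    rw [Finset.sum_congr rfl hLHS, Finset.sum_congr rfl hRHS]
    have hsplit := Finset.sum_filter_add_sum_filter_not (Icc 1 n) (fun i => lam ≤ v i) y
    have hco : (Icc 1 n).filter (fun i => ¬ lam ≤ v i) = (Icc 1 n).filter (fun j => v j < lam) := by
      apply Finset.filter_congr; intro k _; simp [not_le]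
    rw [hco] at hsplit
    rw [Finset.sum_neg_distrib]
    linarith [h1, hsplit]
  -- existence
  · refine ⟨y, fun i => lam * y i, h1, ?_, Or.inl ?_⟩
    · intro i hi
      refine ⟨by rw [neg_neg]; exact min_le_left _ _, le_max_left _ _, h2 i hi, rfl, ?_⟩
      show lam * y i ≤ B i
      rcases le_or_gt (y i) 0 with h0 | h0
      · have := hB i hi; nlinarith
      · exact keyB i hi h0.le
    · intro i hi hvi
      have h0 := key1 i hi hvi
      show lam * y i = min (lam * max (y i) 0) (B i)
      rw [max_eq_left h0]
      exact (min_eq_left (keyB i hi h0)).symm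
  -- uniqueness
  · rintro x p ⟨hsum, hbox, hbr⟩
    dsimp only at hbox hbr
    have hxy : ∀ i ∈ Icc 1 n, x i = y i := by
      rcases hbr with hA | hB'
      · -- buyers pinned at r, sellers forced by sum
        have pin : ∀ i ∈ Icc 1 n, lam ≤ v i → x i = y i := by
          intro i hi hvi
          have h0 := key1 i hi hvi
          have hpA := hA i hi hvi
          have hpx := (hbox i hi).2.2.2.1
          rw [max_eq_left h0, min_eq_left (keyB i hi h0), hpx] at hpA
          exact mul_left_cancel₀ (ne_of_gt hl0) hpA
        have hcoP := Finset.sum_filter_add_sum_filter_not (Icc 1 n) (fun i => lam ≤ v i) x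
        have hcoY := Finset.sum_filter_add_sum_filter_not (Icc 1 n) (fun i => lam ≤ v i) y
        have heqP : ∑ i ∈ (Icc 1 n).filter (fun i => lam ≤ v i), x i
            = ∑ i ∈ (Icc 1 n).filter (fun i => lam ≤ v i), y i := by
          apply Finset.sum_congr rfl
          intro i hi; rw [mem_filter] at hi; exact pin i hi.1 hi.2
        have hrest : ∑ i ∈ (Icc 1 n).filter (fun i => ¬ lam ≤ v i), (x i - y i) = 0 := by
          rw [Finset.sum_sub_distrib]
          rw [hsum] at hcoP; rw [h1] at hcoY
          linarith
        have hnn : ∀ i ∈ (Icc 1 n).filter (fun i => ¬ lam ≤ v i), 0 ≤ x i - y i := by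
          intro i hi; rw [mem_filter] at hi
          have h0 := key2 i hi.1 (not_le.1 hi.2)
          have hbx := (hbox i hi.1).1
          rw [neg_neg, min_eq_left h0] at hbx
          linarith
        have hz := (Finset.sum_eq_zero_iff_of_nonneg hnn).1 hrest
        intro i hi
        by_cases hvi : lam ≤ v i
        · exact pin i hi hvi
        · have := hz i (mem_filter.2 ⟨hi, hvi⟩); linarith
      · -- sellers pinned at -l, buyers forced by sum
        have pin : ∀ j ∈ Icc 1 n, v j < lam → x j = y j := by
          intro j hj hvj
          have h0 := key2 j hj hvj
          have hbx := hB' j hj hvj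
          rw [min_eq_left h0, min_eq_left (by linarith [h2 j hj] : -y j ≤ Γ j)] at hbx
          rw [hbx]; ring
        have hcoP := Finset.sum_filter_add_sum_filter_not (Icc 1 n) (fun i => v i < lam) x
        have hcoY := Finset.sum_filter_add_sum_filter_not (Icc 1 n) (fun i => v i < lam) y
        have heqP : ∑ i ∈ (Icc 1 n).filter (fun i => v i < lam), x i
            = ∑ i ∈ (Icc 1 n).filter (fun i => v i < lam), y i := by
          apply Finset.sum_congr rfl
          intro i hi; rw [mem_filter] at hi; exact pin i hi.1 hi.2
        have hrest : ∑ i ∈ (Icc 1 n).filter (fun i => ¬ v i < lam), (y i - x i) = 0 := by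
          rw [Finset.sum_sub_distrib]
          rw [hsum] at hcoP; rw [h1] at hcoY
          linarith
        have hnn : ∀ i ∈ (Icc 1 n).filter (fun i => ¬ v i < lam), 0 ≤ y i - x i := by
          intro i hi; rw [mem_filter] at hi
          have h0 := key1 i hi.1 (not_lt.1 hi.2)
          have hbx := (hbox i hi.1).2.1
          rw [max_eq_left h0] at hbx
          linarith
        have hz := (Finset.sum_eq_zero_iff_of_nonneg hnn).1 hrest
        intro i hi
        by_cases hvi : v i < lam
        · exact pin i hi hvi
        · have := hz i (mem_filter.2 ⟨hi, hvi⟩); linarith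
    rw [← h3]
    apply Finset.sum_congr rfl
    intro i hi
    rw [hxy i hi]

set_option maxHeartbeats 1600000 in
private lemma exists_good (n : ℕ) (v B Γ : ℕ → ℝ)
    (hv : ∀ i ∈ Icc 1 n, 0 < v i) (hB : ∀ i ∈ Icc 1 n, 0 ≤ B i)
    (hΓ : ∀ i ∈ Icc 1 n, 0 ≤ Γ i) (OPT : ℝ)
    (hOPT : IsGreatest {w : ℝ | ∃ y : ℕ → ℝ,
      (∑ i ∈ Icc 1 n, y i = 0) ∧ (∀ i ∈ Icc 1 n, -Γ i ≤ y i) ∧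
      w = ∑ i ∈ Icc 1 n, (v i * Γ i + min (v i * y i) (B i))} OPT) :
    ∃ y : ℕ → ℝ, (∑ i ∈ Icc 1 n, y i = 0) ∧ (∀ i ∈ Icc 1 n, -Γ i ≤ y i) ∧
      (∑ i ∈ Icc 1 n, (v i * Γ i + min (v i * y i) (B i)) = OPT) ∧
      (∀ i ∈ Icc 1 n, 0 < y i → v i * y i ≤ B i) ∧
      (∀ i ∈ Icc 1 n, ∀ j ∈ Icc 1 n, 0 < y i → y j < 0 → v j < v i) := by
  classical
  have hub : ∀ z : ℕ → ℝ, (∑ i ∈ Icc 1 n, z i = 0) → (∀ i ∈ Icc 1 n, -Γ i ≤ z i) →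
      ∑ i ∈ Icc 1 n, (v i * Γ i + min (v i * z i) (B i)) ≤ OPT := by
    intro z hz1 hz2
    exact hOPT.2 ⟨z, hz1, hz2, rfl⟩
  obtain ⟨y, hy0, hyΓ, hyw⟩ := hOPT.1
  replace hyw : ∑ i ∈ Icc 1 n, (v i * Γ i + min (v i * y i) (B i)) = OPT := hyw.symm
  have hcap := opt_cap n v B Γ hv hB hΓ OPT hub y hy0 hyΓ hyw
  have hsep := opt_sep n v B Γ hv hB hΓ OPT hub y hy0 hyΓ hyw
  by_cases hBne : ((Icc 1 n).filter (fun k => 0 < y k)).Nonempty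
  swap
  · -- no buyers: strict separation vacuous (no sellers either, but unused)
    refine ⟨y, hy0, hyΓ, hyw, hcap, ?_⟩
    intro i hi j hj hyi _
    exact absurd (Finset.mem_filter.2 ⟨hi, hyi⟩) (fun h => hBne ⟨i, h⟩)
  obtain ⟨i₀, hi₀, hmin⟩ := Finset.exists_min_image _ v hBne
  rw [Finset.mem_filter] at hi₀
  obtain ⟨ν, hνdef⟩ : ∃ ν : ℝ, ν = v i₀ := ⟨_, rfl⟩
  rw [← hνdef] at hmin
  by_cases hTs : ((Icc 1 n).filter (fun k => y k < 0 ∧ v k = ν)).Nonempty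
  swap
  · -- no tied sellers: y already strictly separated
    refine ⟨y, hy0, hyΓ, hyw, hcap, ?_⟩
    intro i hi j hj hyi hyj
    have h1 : v j ≤ ν := by rw [hνdef]; exact hsep i₀ hi₀.1 j hj hi₀.2 hyj
    have h2 : ν ≤ v i := hmin i (Finset.mem_filter.2 ⟨hi, hyi⟩)
    rcases lt_or_eq_of_le h1 with h | h
    · linarith
    · exact absurd (Finset.mem_filter.2 ⟨hj, hyj, h⟩) (fun hm => hTs ⟨j, hm⟩)
  -- tie-breaking: shrink tied buyers and tied sellers
  obtain ⟨j₀, hj₀⟩ := hTs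
  rw [Finset.mem_filter] at hj₀
  set Tb := (Icc 1 n).filter (fun k => 0 < y k ∧ v k = ν) with hTbdef
  set Ts := (Icc 1 n).filter (fun k => y k < 0 ∧ v k = ν) with hTsdef
  have hi₀Tb : i₀ ∈ Tb := Finset.mem_filter.2 ⟨hi₀.1, hi₀.2, hνdef.symm⟩
  have hj₀Ts : j₀ ∈ Ts := Finset.mem_filter.2 ⟨hj₀.1, hj₀.2⟩
  obtain ⟨TB, hTBdef⟩ : ∃ TB : ℝ, TB = ∑ k ∈ Tb, y k := ⟨_, rfl⟩
  obtain ⟨TS, hTSdef⟩ : ∃ TS : ℝ, TS = -∑ k ∈ Ts, y k := ⟨_, rfl⟩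
  have hTBpos : 0 < TB := by
    rw [hTBdef]
    exact Finset.sum_pos (fun k hk => (Finset.mem_filter.1 hk).2.1) ⟨i₀, hi₀Tb⟩
  have hTSpos : 0 < TS := by
    have : ∑ k ∈ Ts, y k < 0 :=
      Finset.sum_neg (fun k hk => (Finset.mem_filter.1 hk).2.1) ⟨j₀, hj₀Ts⟩
    rw [hTSdef]; linarith
  obtain ⟨t, htdef⟩ : ∃ t : ℝ, t = min TB TS := ⟨_, rfl⟩
  have ht0 : 0 < t := htdef ▸ lt_min hTBpos hTSpos
  have htB : t ≤ TB := htdef ▸ min_le_left _ _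
  have htS : t ≤ TS := htdef ▸ min_le_right _ _
  obtain ⟨c1, hc1def⟩ : ∃ c1 : ℝ, c1 = 1 - t / TB := ⟨_, rfl⟩
  obtain ⟨c2, hc2def⟩ : ∃ c2 : ℝ, c2 = 1 - t / TS := ⟨_, rfl⟩
  have hc1 : 0 ≤ c1 := by
    have h := (div_le_one hTBpos).2 htB
    rw [hc1def]; linarith
  have hc1' : c1 ≤ 1 := by
    have h := div_pos ht0 hTBpos
    rw [hc1def]; linarith
  have hc2 : 0 ≤ c2 := by
    have h := (div_le_one hTSpos).2 htS
    rw [hc2def]; linarith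
  have hc2' : c2 ≤ 1 := by
    have h := div_pos ht0 hTSpos
    rw [hc2def]; linarith
  obtain ⟨z, hzdef⟩ : ∃ z : ℕ → ℝ, z = fun k =>
      if 0 < y k ∧ v k = ν then y k * c1 else if y k < 0 ∧ v k = ν then y k * c2 else y k := ⟨_, rfl⟩
  have hzTb : ∀ k, (0 < y k ∧ v k = ν) → z k = y k * c1 := by
    intro k h; simp only [hzdef, if_pos h]
  have hzTs : ∀ k, (y k < 0 ∧ v k = ν) → z k = y k * c2 := by
    intro k h
    have hn : ¬ (0 < y k ∧ v k = ν) := by rintro ⟨h1, _⟩; linarith [h.1]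
    simp only [hzdef, if_neg hn, if_pos h]
  have hzo : ∀ k, ¬(0 < y k ∧ v k = ν) → ¬(y k < 0 ∧ v k = ν) → z k = y k := by
    intro k h1 h2; simp only [hzdef, if_neg h1, if_neg h2]
  have hdisj : Disjoint Tb Ts := by
    rw [Finset.disjoint_left]
    intro k hk1 hk2
    rw [Finset.mem_filter] at hk1 hk2
    linarith [hk1.2.1, hk2.2.1]
  have hsub : Tb ∪ Ts ⊆ Icc 1 n := by
    intro k hk
    rcases Finset.mem_union.1 hk with h | h
    · exact (Finset.mem_filter.1 h).1
    · exact (Finset.mem_filter.1 h).1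
  have hTbpart : ∑ k ∈ Tb, (z k - y k) = -t := by
    have he : ∀ k ∈ Tb, z k - y k = y k * (c1 - 1) := by
      intro k hk
      rw [hzTb k (Finset.mem_filter.1 hk).2]; ring
    rw [Finset.sum_congr rfl he, ← Finset.sum_mul, ← hTBdef, hc1def]
    field_simp
    try ring
  have hTspart : ∑ k ∈ Ts, (z k - y k) = t := by
    have he : ∀ k ∈ Ts, z k - y k = y k * (c2 - 1) := by
      intro k hk
      rw [hzTs k (Finset.mem_filter.1 hk).2]; ring
    rw [Finset.sum_congr rfl he, ← Finset.sum_mul]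
    have hTs' : ∑ k ∈ Ts, y k = -TS := by rw [hTSdef]; ring
    rw [hTs', hc2def]
    field_simp
    try ring
  have hdiffsum : ∑ k ∈ Icc 1 n, (z k - y k) = 0 := by
    have hout : ∑ k ∈ Icc 1 n, (z k - y k) = ∑ k ∈ Tb ∪ Ts, (z k - y k) := by
      refine (Finset.sum_subset hsub ?_).symm
      intro k hk hk2
      have h1 : ¬ (0 < y k ∧ v k = ν) := fun h =>
        hk2 (Finset.mem_union.2 (Or.inl (Finset.mem_filter.2 ⟨hk, h⟩)))
      have h2 : ¬ (y k < 0 ∧ v k = ν) := fun h =>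
        hk2 (Finset.mem_union.2 (Or.inr (Finset.mem_filter.2 ⟨hk, h⟩)))
      rw [hzo k h1 h2]; ring
    rw [hout, Finset.sum_union hdisj, hTbpart, hTspart]; ring
  have hz0 : ∑ k ∈ Icc 1 n, z k = 0 := by
    have hd : ∑ k ∈ Icc 1 n, (z k - y k)
        = ∑ k ∈ Icc 1 n, z k - ∑ k ∈ Icc 1 n, y k := Finset.sum_sub_distrib _ _
    rw [hdiffsum, hy0] at hd
    linarith
  have hzΓ : ∀ k ∈ Icc 1 n, -Γ k ≤ z k := by
    intro k hk
    by_cases h1 : 0 < y k ∧ v k = ν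
    · rw [hzTb k h1]
      have : 0 ≤ y k * c1 := mul_nonneg (le_of_lt h1.1) hc1
      linarith [hΓ k hk]
    by_cases h2 : y k < 0 ∧ v k = ν
    · rw [hzTs k h2]
      have : y k ≤ y k * c2 := by nlinarith [h2.1, hc2']
      linarith [hyΓ k hk]
    · rw [hzo k h1 h2]; exact hyΓ k hk
  -- welfare unchanged
  have hterm : ∀ k ∈ Tb ∪ Ts,
      (v k * Γ k + min (v k * z k) (B k)) - (v k * Γ k + min (v k * y k) (B k))
        = ν * (z k - y k) := by
    intro k hk
    rcases Finset.mem_union.1 hk with h | h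
    · rw [Finset.mem_filter] at h
      obtain ⟨hkS, hky, hkv⟩ := h
      have hzk := hzTb k ⟨hky, hkv⟩
      have hzy : z k ≤ y k := by
        rw [hzk]; exact mul_le_of_le_one_right hky.le hc1'
      have hcapk := hcap k hkS hky
      have hm1 : min (v k * z k) (B k) = v k * z k :=
        min_eq_left (le_trans (mul_le_mul_of_nonneg_left hzy (hv k hkS).le) hcapk)
      have hm2 : min (v k * y k) (B k) = v k * y k := min_eq_left hcapk
      rw [hm1, hm2, hkv]; ring
    · rw [Finset.mem_filter] at h
      obtain ⟨hkS, hky, hkv⟩ := h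
      have hzk := hzTs k ⟨hky, hkv⟩
      have hzneg : z k ≤ 0 := by
        rw [hzk]; exact mul_nonpos_iff.2 (Or.inr ⟨hky.le, hc2⟩)
      have hm1 : min (v k * z k) (B k) = v k * z k :=
        min_eq_left (le_trans (mul_nonpos_iff.2 (Or.inl ⟨(hv k hkS).le, hzneg⟩)) (hB k hkS))
      have hm2 : min (v k * y k) (B k) = v k * y k :=
        min_eq_left (le_trans (mul_nonpos_iff.2 (Or.inl ⟨(hv k hkS).le, hky.le⟩)) (hB k hkS))
      rw [hm1, hm2, hkv]; ring
  have hzw : ∑ k ∈ Icc 1 n, (v k * Γ k + min (v k * z k) (B k)) = OPT := by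
    have hout : ∑ k ∈ Icc 1 n,
        ((v k * Γ k + min (v k * z k) (B k)) - (v k * Γ k + min (v k * y k) (B k)))
        = ∑ k ∈ Tb ∪ Ts,
        ((v k * Γ k + min (v k * z k) (B k)) - (v k * Γ k + min (v k * y k) (B k))) := by
      refine (Finset.sum_subset hsub ?_).symm
      intro k hk hk2
      have h1 : ¬ (0 < y k ∧ v k = ν) := fun h =>
        hk2 (Finset.mem_union.2 (Or.inl (Finset.mem_filter.2 ⟨hk, h⟩)))
      have h2 : ¬ (y k < 0 ∧ v k = ν) := fun h =>
        hk2 (Finset.mem_union.2 (Or.inr (Finset.mem_filter.2 ⟨hk, h⟩)))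
      rw [hzo k h1 h2]; ring
    have hval : ∑ k ∈ Tb ∪ Ts,
        ((v k * Γ k + min (v k * z k) (B k)) - (v k * Γ k + min (v k * y k) (B k))) = 0 := by
      rw [Finset.sum_congr rfl hterm, ← Finset.mul_sum]
      have : ∑ k ∈ Tb ∪ Ts, (z k - y k) = 0 := by
        rw [Finset.sum_union hdisj, hTbpart, hTspart]; ring
      rw [this, mul_zero]
    have hd : ∑ k ∈ Icc 1 n,
        ((v k * Γ k + min (v k * z k) (B k)) - (v k * Γ k + min (v k * y k) (B k)))
        = ∑ k ∈ Icc 1 n, (v k * Γ k + min (v k * z k) (B k))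
          - ∑ k ∈ Icc 1 n, (v k * Γ k + min (v k * y k) (B k)) := Finset.sum_sub_distrib _ _
    rw [hout, hval] at hd
    linarith [hyw]
  -- properties of z
  have hzley : ∀ k, z k ≤ y k ∨ (y k ≤ z k ∧ z k ≤ 0) := by
    intro k
    by_cases h1 : 0 < y k ∧ v k = ν
    · left; rw [hzTb k h1]; exact mul_le_of_le_one_right h1.1.le hc1'
    by_cases h2 : y k < 0 ∧ v k = ν
    · right
      rw [hzTs k h2]
      exact ⟨by nlinarith [h2.1, hc2'], mul_nonpos_iff.2 (Or.inr ⟨h2.1.le, hc2⟩)⟩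
    · left; rw [hzo k h1 h2]
  have hzpos : ∀ k, 0 < z k → 0 < y k := by
    intro k hk
    rcases hzley k with h | h
    · linarith
    · linarith
  have hzneg : ∀ k, z k < 0 → y k < 0 := by
    intro k hk
    by_cases h1 : 0 < y k ∧ v k = ν
    · rw [hzTb k h1] at hk
      nlinarith [h1.1, hc1]
    by_cases h2 : y k < 0 ∧ v k = ν
    · exact h2.1
    · rw [hzo k h1 h2] at hk; exact hk
  have hzcap : ∀ i ∈ Icc 1 n, 0 < z i → v i * z i ≤ B i := by
    intro i hi hzi
    have hyi := hzpos i hzi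
    have hle : z i ≤ y i := by
      rcases hzley i with h | h
      · exact h
      · linarith
    exact le_trans (mul_le_mul_of_nonneg_left hle (hv i hi).le) (hcap i hi hyi)
  refine ⟨z, hz0, hzΓ, hzw, hzcap, ?_⟩
  intro i hi j hj hzi hzj
  have hyi := hzpos i hzi
  have hyj := hzneg j hzj
  have h1 : v j ≤ ν := by rw [hνdef]; exact hsep i₀ hi₀.1 j hj hi₀.2 hyj
  have h2 : ν ≤ v i := hmin i (Finset.mem_filter.2 ⟨hi, hyi⟩)
  rcases lt_or_eq_of_le h1 with h | h
  · linarith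
  rcases lt_or_eq_of_le h2 with h' | h'
  · linarith
  -- both i and j are tied at ν
  exfalso
  have hiTb : 0 < y i ∧ v i = ν := ⟨hyi, h'.symm⟩
  have hjTs : y j < 0 ∧ v j = ν := ⟨hyj, h⟩
  have hzi' := hzTb i hiTb
  have hzj' := hzTs j hjTs
  -- z i > 0 forces c1 > 0 hence t < TB hence t = TS hence z j = 0
  have hc1pos : 0 < c1 := by
    rcases lt_or_eq_of_le hc1 with h'' | h''
    · exact h''
    · exfalso; rw [hzi', ← h''] at hzi; simp at hzi
  have htltB : t < TB := by
    rw [hc1def] at hc1pos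
    have h1 : t / TB < 1 := by linarith
    calc t = t / TB * TB := by field_simp
      _ < 1 * TB := mul_lt_mul_of_pos_right h1 hTBpos
      _ = TB := by ring
  have htTS : t = TS := by
    rcases min_cases TB TS with ⟨he, _⟩ | ⟨he, _⟩
    · rw [htdef, he] at htltB; linarith
    · rw [htdef, he]
  have hc20 : c2 = 0 := by
    rw [hc2def, htTS, div_self (ne_of_gt hTSpos)]; ring
  rw [hzj', hc20, mul_zero] at hzj
  exact lt_irrefl 0 hzj

/-- Market Optimal Price: for any agent set there exist intervals `[−l*_i, r*_i]`
and a single uniform price `λ*` such that supply and demand balance, a reachable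
state exists, and every reachable state achieves the optimal market liquid
welfare `OPT`. -/
theorem stmt_17 (n : ℕ) (v B Γ : ℕ → ℝ)
    (hv : ∀ i ∈ Icc 1 n, 0 < v i)
    (hB : ∀ i ∈ Icc 1 n, 0 ≤ B i) (hΓ : ∀ i ∈ Icc 1 n, 0 ≤ Γ i)
    (OPT : ℝ)
    (hOPT : IsGreatest {w : ℝ | ∃ y : ℕ → ℝ,
      (∑ i ∈ Icc 1 n, y i = 0) ∧ (∀ i ∈ Icc 1 n, -Γ i ≤ y i) ∧
      w = ∑ i ∈ Icc 1 n, (v i * Γ i + min (v i * y i) (B i))} OPT) :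
    ∃ (l r : ℕ → ℝ) (lam : ℝ),
      (∀ i ∈ Icc 1 n, 0 ≤ l i ∧ 0 ≤ r i) ∧ 0 < lam ∧
      (∑ i ∈ (Icc 1 n).filter (fun i => lam ≤ v i), min (r i) (B i / lam)
        = ∑ j ∈ (Icc 1 n).filter (fun j => v j < lam), min (l j) (Γ j)) ∧
      (∃ x p : ℕ → ℝ, Reachable n v B Γ l r (fun _ => lam) x p) ∧
      (∀ x p : ℕ → ℝ, Reachable n v B Γ l r (fun _ => lam) x p →
        ∑ i ∈ Icc 1 n, (v i * Γ i + min (v i * x i) (B i)) = OPT) := by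
  classical
  obtain ⟨y, h1, h2, h3, h4, h5⟩ := exists_good n v B Γ hv hB hΓ OPT hOPT
  by_cases hBne : ((Icc 1 n).filter (fun k => 0 < y k)).Nonempty
  · obtain ⟨i₀, hi₀, hmin⟩ := Finset.exists_min_image _ v hBne
    rw [Finset.mem_filter] at hi₀
    refine construct n v B Γ hv hB hΓ OPT y (v i₀) h1 h2 h3 h4 (hv i₀ hi₀.1) ?_ ?_
    · intro i hi hyi
      exact hmin i (Finset.mem_filter.2 ⟨hi, hyi⟩)
    · intro j hj hyj
      exact h5 i₀ hi₀.1 j hj hi₀.2 hyj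
  · -- no buyers: y vanishes on Icc 1 n
    have hzero : ∀ i ∈ Icc 1 n, y i = 0 := by
      have hnp : ∀ i ∈ Icc 1 n, y i ≤ 0 := by
        intro i hi
        by_contra hp; push_neg at hp
        exact hBne ⟨i, Finset.mem_filter.2 ⟨hi, hp⟩⟩
      have hng : ∑ k ∈ Icc 1 n, -y k = 0 := by
        rw [Finset.sum_neg_distrib, h1, neg_zero]
      have := (Finset.sum_eq_zero_iff_of_nonneg
        (fun k hk => neg_nonneg.2 (hnp k hk))).1 hng
      intro i hi
      have := this i hi
      linarith [this]
    refine construct n v B Γ hv hB hΓ OPT y 1 h1 h2 h3 h4 one_pos ?_ ?_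
    · intro i hi hyi
      rw [hzero i hi] at hyi; exact absurd hyi (lt_irrefl 0)
    · intro j hj hyj
      rw [hzero j hj] at hyj; exact absurd hyj (lt_irrefl 0)
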